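/- For the bracket on ℝ² determined by {p,q} = q/(2π), and with x(p,q) = q^{2k} cos(2πp/q), y(p,q) = q^{2k+1} sin(2πp/q), z(p,q) = q², one has on q ≠ 0: {x,y} = -(2k+1) z^{2k} + x², {y,z} = 2zx, {z,x} = 2y. -/

import Mathlib

open Real

/-- The Poisson bracket on `ℝ²` determined by `{p,q} = q/(2π)`. -/
noncomputable def pb2 (f g : ℝ × ℝ → ℝ) (v : ℝ × ℝ) : ℝ :=
  (v.2 / (2 * π)) *
    ((fderiv ℝ f v) (1, 0) * (fderiv ℝ g v) (0, 1) -
     (fderiv ℝ f v) (0, 1) * (fderiv ℝ g v) (1, 0))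

/-- On `q ≠ 0`: `{x,y} = -(2k+1)z^{2k} + x²`, `{y,z} = 2zx`, `{z,x} = 2y` for
`x = q^{2k} cos(2πp/q)`, `y = q^{2k+1} sin(2πp/q)`, `z = q²`. -/
theorem stmt17 (k : ℕ) (hk : 2 ≤ k)
    (x y z : ℝ × ℝ → ℝ)
    (hx : ∀ v : ℝ × ℝ, x v = v.2 ^ (2 * k) * Real.cos (2 * π * v.1 / v.2))
    (hy : ∀ v : ℝ × ℝ, y v = v.2 ^ (2 * k + 1) * Real.sin (2 * π * v.1 / v.2))
    (hz : ∀ v : ℝ × ℝ, z v = v.2 ^ 2) :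
    ∀ v : ℝ × ℝ, v.2 ≠ 0 →
      pb2 x y v = -(2 * (k : ℝ) + 1) * z v ^ (2 * k) + x v ^ 2 ∧
      pb2 y z v = 2 * z v * x v ∧
      pb2 z x v = 2 * y v := by
  have hx' : x = fun v : ℝ × ℝ => v.2 ^ (2 * k) * Real.cos (2 * π * v.1 / v.2) := funext hx
  have hy' : y = fun v : ℝ × ℝ => v.2 ^ (2 * k + 1) * Real.sin (2 * π * v.1 / v.2) := funext hy
  have hz' : z = fun v : ℝ × ℝ => v.2 ^ 2 := funext hz
  subst hx' hy' hz'
  obtain ⟨n, hn⟩ : ∃ n, 2 * k = n + 2 := ⟨2 * k - 2, by omega⟩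
  have hk' : (2 : ℝ) * k + 1 = (n : ℝ) + 3 := by
    have h := congrArg (Nat.cast : ℕ → ℝ) hn
    push_cast at h; linarith
  rintro ⟨p, q⟩ hv
  simp only at hv
  rw [hn]
  have hinv : HasFDerivAt (fun w : ℝ × ℝ => (w.2)⁻¹)
      ((-(q^2)⁻¹) • ContinuousLinearMap.snd ℝ ℝ ℝ) (p, q) :=
    (hasDerivAt_inv hv).comp_hasFDerivAt (p,q) hasFDerivAt_snd
  have hg := (hasFDerivAt_fst.const_mul (2*π)).mul hinv
  have hc := (Real.hasDerivAt_cos ((2*π*p) * q⁻¹)).comp_hasFDerivAt (p,q) hg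
  have hs := (Real.hasDerivAt_sin ((2*π*p) * q⁻¹)).comp_hasFDerivAt (p,q) hg
  simp only [Function.comp_def] at hc hs
  have hpow : ∀ j : ℕ, HasFDerivAt (fun w : ℝ × ℝ => w.2 ^ j)
      (((j : ℝ) * q ^ (j-1)) • ContinuousLinearMap.snd ℝ ℝ ℝ) (p, q) := fun j =>
    (hasDerivAt_pow j q).comp_hasFDerivAt (p,q) hasFDerivAt_snd
  have hX := (hpow (n+2)).mul hc
  have hY := (hpow (n+3)).mul hs
  have hZ := hpow 2
  have e1 : fderiv ℝ (fun w : ℝ × ℝ => w.2 ^ (n+2) * Real.cos (2*π*w.1*(w.2)⁻¹)) (p,q) (1,0)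
      = -(2*π) * q^(n+1) * Real.sin (2*π*p*q⁻¹) := by
    rw [HasFDerivAt.fderiv (f := fun w : ℝ × ℝ => w.2 ^ (n+2) * Real.cos (2*π*w.1*(w.2)⁻¹)) hX]; simp; field_simp; ring
  have e2 : fderiv ℝ (fun w : ℝ × ℝ => w.2 ^ (n+2) * Real.cos (2*π*w.1*(w.2)⁻¹)) (p,q) (0,1)
      = ((n:ℝ)+2) * q^(n+1) * Real.cos (2*π*p*q⁻¹) + 2*π*p*q^n * Real.sin (2*π*p*q⁻¹) := by
    rw [HasFDerivAt.fderiv (f := fun w : ℝ × ℝ => w.2 ^ (n+2) * Real.cos (2*π*w.1*(w.2)⁻¹)) hX]; simp; field_simp; ring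
  have e3 : fderiv ℝ (fun w : ℝ × ℝ => w.2 ^ (n+3) * Real.sin (2*π*w.1*(w.2)⁻¹)) (p,q) (1,0)
      = 2*π*q^(n+2) * Real.cos (2*π*p*q⁻¹) := by
    rw [HasFDerivAt.fderiv (f := fun w : ℝ × ℝ => w.2 ^ (n+3) * Real.sin (2*π*w.1*(w.2)⁻¹)) hY]; simp; field_simp; ring
  have e4 : fderiv ℝ (fun w : ℝ × ℝ => w.2 ^ (n+3) * Real.sin (2*π*w.1*(w.2)⁻¹)) (p,q) (0,1)
      = ((n:ℝ)+3) * q^(n+2) * Real.sin (2*π*p*q⁻¹) - 2*π*p*q^(n+1) * Real.cos (2*π*p*q⁻¹) := by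
    rw [HasFDerivAt.fderiv (f := fun w : ℝ × ℝ => w.2 ^ (n+3) * Real.sin (2*π*w.1*(w.2)⁻¹)) hY]; simp; field_simp; ring
  have e5 : fderiv ℝ (fun w : ℝ × ℝ => w.2 ^ 2) (p,q) ((1:ℝ),(0:ℝ)) = 0 := by
    rw [hZ.fderiv]; simp
  have e6 : fderiv ℝ (fun w : ℝ × ℝ => w.2 ^ 2) (p,q) ((0:ℝ),(1:ℝ)) = 2*q := by
    rw [hZ.fderiv]; simp
  have hpyth : Real.sin (2*π*p*q⁻¹)^2 + Real.cos (2*π*p*q⁻¹)^2 = 1 :=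
    Real.sin_sq_add_cos_sq _
  simp only [pb2, div_eq_mul_inv]
  rw [e1, e2, e3, e4, e5, e6, hk']
  simp only [← div_eq_mul_inv] at hpyth ⊢
  refine ⟨?_, ?_, ?_⟩
  · field_simp
    linear_combination (-((n:ℝ)+3) * q^(2*n+4)) * hpyth
  · field_simp; ring
  · field_simp; ring
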